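/- arXiv:2312.02825 — 3 statements merged into one kernel-verified Lean document; each statement's English description precedes it below -/
import Mathlib

section
/- The Gonzalez discrete gradient is consistent: for f twice continuously differentiable and z = (x+y)/2, D̄f(x,y) = Df(z) + O(‖y−x‖) as y → x; more precisely, there exist constants C, δ > 0 such that ‖D̄f(x,y) − Df((x+y)/2)‖ ≤ C‖y−x‖ whenever 0 < ‖y−x‖ < δ. -/
open scoped RealInnerProductSpace

/-- The Gonzalez discrete gradient
`D̄f(x,y) = Df(z) + [(f(y) - f(x) - Df(z)·(y-x)) / ‖y-x‖²] (y-x)`, `z = (x+y)/2`. -/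
noncomputable def gonzalezDiscreteGradient {m : ℕ}
    (f : EuclideanSpace ℝ (Fin m) → ℝ) (x y : EuclideanSpace ℝ (Fin m)) :
    EuclideanSpace ℝ (Fin m) :=
  gradient f ((1/2 : ℝ) • (x + y)) +
    ((f y - f x - ⟪gradient f ((1/2 : ℝ) • (x + y)), y - x⟫) / ‖y - x‖ ^ 2) • (y - x)

/-- **Consistency of the Gonzalez discrete gradient:**
for `f` twice continuously differentiable, `D̄f(x,y) = Df((x+y)/2) + O(‖y-x‖)`:
there are `C, δ > 0` with `‖D̄f(x,y) - Df((x+y)/2)‖ ≤ C‖y-x‖` whenever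
`0 < ‖y-x‖ < δ`. -/
theorem gonzalez_consistency {m : ℕ}
    (f : EuclideanSpace ℝ (Fin m) → ℝ) (hf : ContDiff ℝ 2 f)
    (x : EuclideanSpace ℝ (Fin m)) :
    ∃ C δ : ℝ, 0 < C ∧ 0 < δ ∧ ∀ y : EuclideanSpace ℝ (Fin m),
      0 < ‖y - x‖ → ‖y - x‖ < δ →
      ‖gonzalezDiscreteGradient f x y - gradient f ((1/2 : ℝ) • (x + y))‖
        ≤ C * ‖y - x‖ := by
  have hf1 : ContDiff ℝ 1 (fderiv ℝ f) := hf.fderiv_right (by norm_num)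
  obtain ⟨K, t, ht, hK⟩ := hf1.contDiffAt.exists_lipschitzOnWith (x := x)
  obtain ⟨δ, hδ, hball⟩ := Metric.mem_nhds_iff.mp ht
  refine ⟨K + 1, δ, by positivity, hδ, fun y hy hyδ => ?_⟩
  set z := (1/2 : ℝ) • (x + y) with hz
  -- the segment from x to y lies in the ball
  have hseg : segment ℝ x y ⊆ Metric.ball x δ := by
    intro u hu
    obtain ⟨a, b, ha, hb, hab, rfl⟩ := hu
    have : a • x + b • y - x = b • (y - x) := by
      have : a = 1 - b := by linarith
      rw [this]; module
    rw [Metric.mem_ball, dist_eq_norm, this, norm_smul]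
    calc ‖b‖ * ‖y - x‖ = b * ‖y - x‖ := by rw [Real.norm_of_nonneg hb]
      _ ≤ 1 * ‖y - x‖ := by nlinarith [norm_nonneg (y - x)]
      _ < δ := by linarith
  have hzseg : z ∈ segment ℝ x y :=
    ⟨1/2, 1/2, by norm_num, by norm_num, by norm_num, by rw [hz]; module⟩
  -- distance from any segment point to z
  have hdist : ∀ u ∈ segment ℝ x y, ‖u - z‖ ≤ ‖y - x‖ := by
    intro u hu
    obtain ⟨a, b, ha, hb, hab, rfl⟩ := hu
    have heq : a • x + b • y - z = (b - 1/2) • (y - x) := by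
      have : a = 1 - b := by linarith
      rw [this, hz]; module
    rw [heq, norm_smul]
    have : ‖b - 1/2‖ ≤ 1 := by
      rw [Real.norm_eq_abs]; rw [abs_le]; constructor <;> nlinarith
    nlinarith [norm_nonneg (y - x)]
  -- mean value bound: |f y - f x - Df(z)(y-x)| ≤ K‖y-x‖²
  have hmv : ‖f y - f x - (fderiv ℝ f z) (y - x)‖ ≤ (K * ‖y - x‖) * ‖y - x‖ := by
    apply Convex.norm_image_sub_le_of_norm_fderiv_le'
      (fun u _ => hf.differentiable (by norm_num) u) ?_ (convex_segment x y)
      (left_mem_segment ℝ x y) (right_mem_segment ℝ x y)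
    intro u hu
    have := hK.norm_sub_le (hball (hseg hu)) (hball (hseg hzseg))
    calc ‖fderiv ℝ f u - fderiv ℝ f z‖ ≤ K * ‖u - z‖ := this
      _ ≤ K * ‖y - x‖ := by
          exact mul_le_mul_of_nonneg_left (hdist u hu) K.coe_nonneg
  -- inner product equals fderiv
  have hinner : ⟪gradient f z, y - x⟫ = fderiv ℝ f z (y - x) := by
    rw [gradient, InnerProductSpace.toDual_symm_apply]
  -- compute the difference
  have hdiff : gonzalezDiscreteGradient f x y - gradient f z =
      ((f y - f x - ⟪gradient f z, y - x⟫) / ‖y - x‖ ^ 2) • (y - x) := by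
    rw [gonzalezDiscreteGradient]; abel
  rw [hdiff, norm_smul, Real.norm_eq_abs, abs_div, abs_of_nonneg (by positivity : (0:ℝ) ≤ ‖y - x‖ ^ 2),
    hinner]
  rw [Real.norm_eq_abs] at hmv
  have h2 : ‖y - x‖ ^ 2 = ‖y - x‖ * ‖y - x‖ := by ring
  rw [div_mul_eq_mul_div, div_le_iff₀ (by positivity)]
  calc |f y - f x - (fderiv ℝ f z) (y - x)| * ‖y - x‖
      ≤ ((K * ‖y - x‖) * ‖y - x‖) * ‖y - x‖ := by
        exact mul_le_mul_of_nonneg_right hmv (norm_nonneg _)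
    _ ≤ ((K + 1) * ‖y - x‖) * ‖y - x‖ ^ 2 := by
        rw [h2]; ring_nf; nlinarith [norm_nonneg (y - x), K.coe_nonneg, hy]
end

section
/- The discrete Livens scheme exactly conserves the generalized energy: if (qⁿ, vⁿ, pⁿ) and (qⁿ⁺¹, vⁿ⁺¹, pⁿ⁺¹) satisfy qⁿ⁺¹ − qⁿ = h v^{n+1/2}, pⁿ⁺¹ − pⁿ = h D̄₁L − h Σₖ λₖ D̄gₖ, p^{n+1/2} = D̄₂L, g(qⁿ) = g(qⁿ⁺¹) = 0, where the discrete derivatives satisfy the directionality conditions D̄₁L·Δq + D̄₂L·Δv = L(qⁿ⁺¹,vⁿ⁺¹) − L(qⁿ,vⁿ) and D̄gₖ·Δq = gₖ(qⁿ⁺¹) − gₖ(qⁿ), then pⁿ⁺¹·vⁿ⁺¹ − L(qⁿ⁺¹,vⁿ⁺¹) = pⁿ·vⁿ − L(qⁿ,vⁿ). -/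
open scoped RealInnerProductSpace

/-- **Discrete energy conservation of the constrained discrete Livens scheme.**
If `(qⁿ,vⁿ,pⁿ)` and `(qⁿ⁺¹,vⁿ⁺¹,pⁿ⁺¹)` satisfy the discrete Livens equations
`qⁿ⁺¹ - qⁿ = h v^{n+1/2}`, `pⁿ⁺¹ - pⁿ = h D̄₁L - h Σₖ λₖ D̄gₖ`, `p^{n+1/2} = D̄₂L`,
`g(qⁿ) = g(qⁿ⁺¹) = 0`, with discrete derivatives satisfying the directionality
conditions, then the discrete generalized energy `pⁿ·vⁿ - L(qⁿ,vⁿ)` is conserved. -/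
theorem discrete_livens_energy_conservation {d m : ℕ}
    (L : EuclideanSpace ℝ (Fin d) → EuclideanSpace ℝ (Fin d) → ℝ)
    (g : EuclideanSpace ℝ (Fin d) → EuclideanSpace ℝ (Fin m))
    (h : ℝ) (hh : 0 < h)
    (qn qn1 vn vn1 pn pn1 D1L D2L : EuclideanSpace ℝ (Fin d))
    (Dg : Fin m → EuclideanSpace ℝ (Fin d)) (lam : Fin m → ℝ)
    (heq1 : qn1 - qn = h • ((1/2 : ℝ) • (vn + vn1)))
    (heq2 : pn1 - pn = h • D1L - h • ∑ k : Fin m, lam k • Dg k)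
    (heq3 : (1/2 : ℝ) • (pn + pn1) = D2L)
    (heq4 : g qn1 = 0) (heq5 : g qn = 0)
    (hdirL : ⟪D1L, qn1 - qn⟫ + ⟪D2L, vn1 - vn⟫ = L qn1 vn1 - L qn vn)
    (hdirg : ∀ k : Fin m, ⟪Dg k, qn1 - qn⟫ = g qn1 k - g qn k) :
    ⟪pn1, vn1⟫ - L qn1 vn1 = ⟪pn, vn⟫ - L qn vn := by
  have hk : ∀ k : Fin m, ⟪Dg k, qn1 - qn⟫ = 0 := by
    intro k; rw [hdirg k, heq4, heq5]; simp
  have hsum : ⟪∑ k : Fin m, lam k • Dg k, qn1 - qn⟫ = (0:ℝ) := by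
    rw [sum_inner]
    simp only [real_inner_smul_left, hk, mul_zero]
    exact Finset.sum_const_zero
  have h1 : ⟪pn1 - pn, qn1 - qn⟫ = h * ⟪D1L, qn1 - qn⟫ := by
    rw [heq2, inner_sub_left, real_inner_smul_left, real_inner_smul_left, hsum]; ring
  have h2 : ⟪pn1 - pn, qn1 - qn⟫ = h * ⟪pn1 - pn, (1/2 : ℝ) • (vn + vn1)⟫ := by
    rw [heq1, real_inner_smul_right]
  have hD1 : ⟪D1L, qn1 - qn⟫ = ⟪pn1 - pn, (1/2 : ℝ) • (vn + vn1)⟫ := by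
    have := h1.symm.trans h2
    exact mul_left_cancel₀ (ne_of_gt hh) this
  rw [← heq3, hD1] at hdirL
  simp only [inner_sub_left, inner_sub_right, inner_add_left, inner_add_right,
    real_inner_smul_left, real_inner_smul_right] at hdirL
  linarith
end

section
/- For the unconstrained discrete Livens scheme (no constraint terms): if qⁿ⁺¹ − qⁿ = h(vⁿ+vⁿ⁺¹)/2, pⁿ⁺¹ − pⁿ = h D̄₁L, (pⁿ+pⁿ⁺¹)/2 = D̄₂L, and the partitioned directionality condition D̄₁L·(qⁿ⁺¹−qⁿ) + D̄₂L·(vⁿ⁺¹−vⁿ) = L(qⁿ⁺¹,vⁿ⁺¹) − L(qⁿ,vⁿ) holds, then the discrete generalized energy Eⁿ = pⁿ·vⁿ − L(qⁿ,vⁿ) satisfies Eⁿ⁺¹ = Eⁿ. -/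
open scoped RealInnerProductSpace

/-- **Discrete energy conservation of the unconstrained discrete Livens scheme.**
If `qⁿ⁺¹ - qⁿ = h(vⁿ+vⁿ⁺¹)/2`, `pⁿ⁺¹ - pⁿ = h D̄₁L`, `(pⁿ+pⁿ⁺¹)/2 = D̄₂L` and the
partitioned directionality condition holds, then the discrete generalized energy
`Eⁿ = pⁿ·vⁿ - L(qⁿ,vⁿ)` satisfies `Eⁿ⁺¹ = Eⁿ`. -/
theorem discrete_livens_energy_conservation_unconstrained {d : ℕ}
    (L : EuclideanSpace ℝ (Fin d) → EuclideanSpace ℝ (Fin d) → ℝ)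
    (h : ℝ) (hh : 0 < h)
    (qn qn1 vn vn1 pn pn1 D1L D2L : EuclideanSpace ℝ (Fin d))
    (heq1 : qn1 - qn = h • ((1/2 : ℝ) • (vn + vn1)))
    (heq2 : pn1 - pn = h • D1L)
    (heq3 : (1/2 : ℝ) • (pn + pn1) = D2L)
    (hdirL : ⟪D1L, qn1 - qn⟫ + ⟪D2L, vn1 - vn⟫ = L qn1 vn1 - L qn vn) :
    ⟪pn1, vn1⟫ - L qn1 vn1 = ⟪pn, vn⟫ - L qn vn := by
  rw [heq1, ← heq3, real_inner_smul_right, ← real_inner_smul_left, ← heq2] at hdirL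
  simp only [inner_sub_left, inner_add_left, inner_add_right, inner_sub_right,
    real_inner_smul_left, real_inner_smul_right, real_inner_comm vn pn1, real_inner_comm vn1 pn,
    real_inner_comm vn pn, real_inner_comm vn1 pn1] at hdirL
  rw [real_inner_comm vn1 pn1, real_inner_comm vn pn]
  linarith
end
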